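/- (Lemma 3.2.) For all r, s > 0 and β = 0 the kernel satisfies k₀(r,s) = (1/(4π²)) ∫₀¹ ∫₀^{2π} ∫₀^{2π} q r s · (r − q cos θ₁)(s − q cos θ₂) / ( q² + r² − 2qr cos θ₁ + q² + s² − 2qs cos θ₂ ) dθ₁ dθ₂ dq. -/

import Mathlib

open MeasureTheory Real

noncomputable section

/-- The modified Bessel function of order 0: `I₀(a) = (1/2π) ∫₀^{2π} e^{a cos θ} dθ`. -/
def besselI0 (a : ℝ) : ℝ :=
  (1 / (2 * π)) * ∫ θ in (0:ℝ)..(2 * π), Real.exp (a * Real.cos θ)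

/-- The modified Bessel function of order 1: `I₁(a) = (1/2π) ∫₀^{2π} e^{a cos θ} cos θ dθ`. -/
def besselI1 (a : ℝ) : ℝ :=
  (1 / (2 * π)) * ∫ θ in (0:ℝ)..(2 * π), Real.exp (a * Real.cos θ) * Real.cos θ

/-- The sensitivity kernel
`k_β(r,s) = ∫₀¹ q ∫_β^∞ e^{−ρ(2q²+r²+s²)} (r I₀(2qrρ) − q I₁(2qrρ)) (s I₀(2qsρ) − q I₁(2qsρ)) r s dρ dq`. -/
def ker (β r s : ℝ) : ℝ :=
  ∫ q in (0:ℝ)..1, q * ∫ ρ in Set.Ioi β,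
    Real.exp (-(ρ * (2 * q ^ 2 + r ^ 2 + s ^ 2))) *
      (r * besselI0 (2 * q * r * ρ) - q * besselI1 (2 * q * r * ρ)) *
      (s * besselI0 (2 * q * s * ρ) - q * besselI1 (2 * q * s * ρ)) * r * s

end

open Set

lemma exp_Ioi {b : ℝ} (hb : 0 < b) : ∫ x in Ioi (0:ℝ), Real.exp (-(b*x)) = 1/b := by
  have h := integral_comp_mul_left_Ioi (fun x => Real.exp (-x)) 0 hb
  simp only [mul_zero, integral_exp_neg_Ioi_zero, smul_eq_mul, mul_one] at h
  rw [show (fun x => Real.exp (-(b*x))) = (fun x => Real.exp (-(b*x))) from rfl]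
  simpa [neg_mul] using h

lemma bessel_combo (u v x : ℝ) :
    u * besselI0 x - v * besselI1 x
      = (1/(2*π)) * ∫ θ in Ioc (0:ℝ) (2*π), (u - v * Real.cos θ) * Real.exp (x * Real.cos θ) := by
  have h2π : (0:ℝ) ≤ 2*π := by positivity
  unfold besselI0 besselI1
  rw [intervalIntegral.integral_of_le h2π, intervalIntegral.integral_of_le h2π]
  have h1 : IntegrableOn (fun θ => u * Real.exp (x * Real.cos θ)) (Ioc 0 (2*π)) := by
    apply Continuous.integrableOn_Ioc; continuity
  have h2 : IntegrableOn (fun θ => v * (Real.exp (x * Real.cos θ) * Real.cos θ)) (Ioc 0 (2*π)) := by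
    apply Continuous.integrableOn_Ioc; continuity
  have : ∫ θ in Ioc (0:ℝ) (2*π), (u - v * Real.cos θ) * Real.exp (x * Real.cos θ)
      = ∫ θ in Ioc (0:ℝ) (2*π), (u * Real.exp (x * Real.cos θ) - v * (Real.exp (x * Real.cos θ) * Real.cos θ)) := by
    apply setIntegral_congr_fun measurableSet_Ioc
    intro θ _; ring
  rw [this, integral_sub h1 h2, integral_const_mul, integral_const_mul]
  ring

lemma key (r s : ℝ) (hr : 0 < r) (hs : 0 < s) (q : ℝ) (hq : 0 < q)
    (hqr : q ≠ r) (hqs : q ≠ s) :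
    q * (∫ ρ in Set.Ioi (0:ℝ),
      Real.exp (-(ρ * (2 * q ^ 2 + r ^ 2 + s ^ 2))) *
        (r * besselI0 (2 * q * r * ρ) - q * besselI1 (2 * q * r * ρ)) *
        (s * besselI0 (2 * q * s * ρ) - q * besselI1 (2 * q * s * ρ)) * r * s)
    = (1 / (4 * π ^ 2)) * ∫ θ₁ in (0:ℝ)..(2 * π), ∫ θ₂ in (0:ℝ)..(2 * π),
        q * r * s * ((r - q * Real.cos θ₁) * (s - q * Real.cos θ₂)) /
          (q ^ 2 + r ^ 2 - 2 * q * r * Real.cos θ₁ +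
            q ^ 2 + s ^ 2 - 2 * q * s * Real.cos θ₂) := by
  have h2π : (0:ℝ) ≤ 2 * π := by positivity
  set E : Set ℝ := Ioc 0 (2 * π) with hE
  set μE : Measure ℝ := volume.restrict E with hμE
  set D : ℝ → ℝ → ℝ := fun θ₁ θ₂ =>
    q ^ 2 + r ^ 2 - 2 * q * r * Real.cos θ₁ + q ^ 2 + s ^ 2 - 2 * q * s * Real.cos θ₂ with hD
  set N : ℝ × ℝ → ℝ := fun z => (r - q * Real.cos z.1) * (s - q * Real.cos z.2) with hN
  set f : ℝ → ℝ × ℝ → ℝ := fun ρ z => N z * Real.exp (-(ρ * D z.1 z.2)) with hf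
  set δ : ℝ := (q - r) ^ 2 + (q - s) ^ 2 with hδ
  have hδpos : 0 < δ := by
    have h1 : q - r ≠ 0 := sub_ne_zero.mpr hqr
    have h2 : q - s ≠ 0 := sub_ne_zero.mpr hqs
    positivity
  have hDδ : ∀ θ₁ θ₂, δ ≤ D θ₁ θ₂ := by
    intro θ₁ θ₂
    have c1 := Real.cos_le_one θ₁
    have c2 := Real.cos_le_one θ₂
    simp only [hD, hδ]
    nlinarith [mul_nonneg (mul_nonneg hq.le hr.le) (sub_nonneg.2 c1),
      mul_nonneg (mul_nonneg hq.le hs.le) (sub_nonneg.2 c2)]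
  have hDpos : ∀ θ₁ θ₂, 0 < D θ₁ θ₂ := fun θ₁ θ₂ => lt_of_lt_of_le hδpos (hDδ θ₁ θ₂)
  set C : ℝ := (r + q) * (s + q) with hC
  have hNC : ∀ z : ℝ × ℝ, |N z| ≤ C := by
    intro z
    have a1 : |r - q * Real.cos z.1| ≤ r + q := by
      rw [abs_le]
      constructor <;> nlinarith [Real.cos_le_one z.1, Real.neg_one_le_cos z.1]
    have a2 : |s - q * Real.cos z.2| ≤ s + q := by
      rw [abs_le]
      constructor <;> nlinarith [Real.cos_le_one z.2, Real.neg_one_le_cos z.2]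
    calc |N z| = |r - q * Real.cos z.1| * |s - q * Real.cos z.2| := abs_mul _ _
      _ ≤ (r + q) * (s + q) := by
          apply mul_le_mul a1 a2 (abs_nonneg _) (by positivity)
  haveI hfinE : IsFiniteMeasure μE := by
    constructor
    rw [hμE, Measure.restrict_apply_univ]
    exact measure_Ioc_lt_top
  have hDcont : Continuous (fun z : ℝ × ℝ => D z.1 z.2) := by
    simp only [hD]; fun_prop
  have hNcont : Continuous N := by simp only [hN]; fun_prop
  -- Step A : pointwise identity in ρ
  have stepA : ∀ ρ : ℝ,
      Real.exp (-(ρ * (2 * q ^ 2 + r ^ 2 + s ^ 2))) *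
        (r * besselI0 (2 * q * r * ρ) - q * besselI1 (2 * q * r * ρ)) *
        (s * besselI0 (2 * q * s * ρ) - q * besselI1 (2 * q * s * ρ)) * r * s
      = (r * s / (4 * π ^ 2)) * ∫ z, f ρ z ∂(μE.prod μE) := by
    intro ρ
    rw [bessel_combo r q (2 * q * r * ρ), bessel_combo s q (2 * q * s * ρ)]
    have hmulint : (∫ θ in E, (r - q * Real.cos θ) * Real.exp (2 * q * r * ρ * Real.cos θ)) *
        (∫ θ in E, (s - q * Real.cos θ) * Real.exp (2 * q * s * ρ * Real.cos θ))
        = ∫ z, ((r - q * Real.cos z.1) * Real.exp (2 * q * r * ρ * Real.cos z.1)) *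
            ((s - q * Real.cos z.2) * Real.exp (2 * q * s * ρ * Real.cos z.2)) ∂(μE.prod μE) := by
      exact (integral_prod_mul (fun θ => (r - q * Real.cos θ) * Real.exp (2 * q * r * ρ * Real.cos θ))
        (fun θ => (s - q * Real.cos θ) * Real.exp (2 * q * s * ρ * Real.cos θ))).symm
    have hpt : ∀ z : ℝ × ℝ,
        Real.exp (-(ρ * (2 * q ^ 2 + r ^ 2 + s ^ 2))) *
          (((r - q * Real.cos z.1) * Real.exp (2 * q * r * ρ * Real.cos z.1)) *
            ((s - q * Real.cos z.2) * Real.exp (2 * q * s * ρ * Real.cos z.2)))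
        = f ρ z := by
      intro z
      simp only [hf, hN]
      rw [show Real.exp (-(ρ * (2 * q ^ 2 + r ^ 2 + s ^ 2))) *
          (((r - q * Real.cos z.1) * Real.exp (2 * q * r * ρ * Real.cos z.1)) *
            ((s - q * Real.cos z.2) * Real.exp (2 * q * s * ρ * Real.cos z.2)))
        = ((r - q * Real.cos z.1) * (s - q * Real.cos z.2)) *
            (Real.exp (-(ρ * (2 * q ^ 2 + r ^ 2 + s ^ 2))) *
              Real.exp (2 * q * r * ρ * Real.cos z.1) * Real.exp (2 * q * s * ρ * Real.cos z.2))
        from by ring]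
      rw [← Real.exp_add, ← Real.exp_add]
      congr 1
      simp only [hD]
      ring
    calc Real.exp (-(ρ * (2 * q ^ 2 + r ^ 2 + s ^ 2))) *
          (1 / (2 * π) * ∫ θ in E, (r - q * Real.cos θ) * Real.exp (2 * q * r * ρ * Real.cos θ)) *
          (1 / (2 * π) * ∫ θ in E, (s - q * Real.cos θ) * Real.exp (2 * q * s * ρ * Real.cos θ)) * r * s
        = (r * s / (4 * π ^ 2)) * (Real.exp (-(ρ * (2 * q ^ 2 + r ^ 2 + s ^ 2))) *
            ((∫ θ in E, (r - q * Real.cos θ) * Real.exp (2 * q * r * ρ * Real.cos θ)) *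
             (∫ θ in E, (s - q * Real.cos θ) * Real.exp (2 * q * s * ρ * Real.cos θ)))) := by ring
      _ = (r * s / (4 * π ^ 2)) * ∫ z, f ρ z ∂(μE.prod μE) := by
          rw [hmulint, ← integral_const_mul]
          congr 1
          exact integral_congr_ae (Filter.Eventually.of_forall hpt)
  -- integrability on the triple product
  have hprodeq : (volume.restrict (Ioi (0:ℝ))).prod (μE.prod μE)
      = ((volume : Measure ℝ).prod ((volume : Measure ℝ).prod (volume : Measure ℝ))).restrict
          ((Ioi (0:ℝ)) ×ˢ (E ×ˢ E)) := by
    rw [hμE, Measure.prod_restrict, Measure.prod_restrict]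
  have hbigmeas : MeasurableSet ((Ioi (0:ℝ)) ×ˢ (E ×ˢ E)) :=
    measurableSet_Ioi.prod (measurableSet_Ioc.prod measurableSet_Ioc)
  have hfcont : Continuous (Function.uncurry f) := by
    simp only [hf, Function.uncurry]
    exact (hNcont.comp continuous_snd).mul
      (Real.continuous_exp.comp
        ((continuous_fst.mul (hDcont.comp continuous_snd)).neg))
  have hCnn : 0 ≤ C := by positivity
  have hfint : Integrable (Function.uncurry f) ((volume.restrict (Ioi (0:ℝ))).prod (μE.prod μE)) := by
    have hbd : Integrable (fun p : ℝ × (ℝ × ℝ) => Real.exp (-(δ * p.1)) * C)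
        ((volume.restrict (Ioi (0:ℝ))).prod (μE.prod μE)) := by
      have hexp : Integrable (fun ρ : ℝ => Real.exp (-(δ * ρ))) (volume.restrict (Ioi (0:ℝ))) := by
        have := exp_neg_integrableOn_Ioi 0 hδpos
        simpa [neg_mul, IntegrableOn] using this
      exact Integrable.mul_prod hexp (integrable_const C)
    apply Integrable.mono' hbd
    · exact hfcont.aestronglyMeasurable
    · rw [hprodeq]
      refine (ae_restrict_iff' hbigmeas).mpr (Filter.Eventually.of_forall ?_)
      rintro ⟨ρ, z⟩ ⟨hρ, _⟩
      simp only [Function.uncurry, hf, Real.norm_eq_abs]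
      rw [abs_mul, Real.abs_exp]
      have hρ0 : (0:ℝ) < ρ := hρ
      have hexp : Real.exp (-(ρ * D z.1 z.2)) ≤ Real.exp (-(δ * ρ)) := by
        apply Real.exp_le_exp.mpr
        nlinarith [hDδ z.1 z.2]
      calc |N z| * Real.exp (-(ρ * D z.1 z.2)) ≤ C * Real.exp (-(δ * ρ)) :=
            mul_le_mul (hNC z) hexp (Real.exp_nonneg _) hCnn
        _ = Real.exp (-(δ * ρ)) * C := by ring
  have swap : (∫ ρ in Ioi (0:ℝ), ∫ z, f ρ z ∂(μE.prod μE))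
      = ∫ z, (∫ ρ in Ioi (0:ℝ), f ρ z) ∂(μE.prod μE) := integral_integral_swap hfint
  have stepC : ∀ z : ℝ × ℝ, (∫ ρ in Ioi (0:ℝ), f ρ z) = N z * (1 / D z.1 z.2) := by
    intro z
    simp only [hf]
    rw [MeasureTheory.integral_const_mul]
    congr 1
    rw [← exp_Ioi (hDpos z.1 z.2)]
    apply integral_congr_ae
    filter_upwards with ρ
    ring_nf
  have stepD : Integrable (fun z : ℝ × ℝ => N z * (1 / D z.1 z.2)) (μE.prod μE) := by
    have hcont : Continuous (fun z : ℝ × ℝ => N z * (1 / D z.1 z.2)) :=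
      hNcont.mul (continuous_const.div hDcont (fun z => (hDpos z.1 z.2).ne'))
    apply Integrable.mono' (integrable_const (C * (1 / δ))) hcont.aestronglyMeasurable
    filter_upwards with z
    simp only [Real.norm_eq_abs, abs_mul]
    have h1 : |1 / D z.1 z.2| ≤ 1 / δ := by
      rw [abs_of_pos (one_div_pos.mpr (hDpos z.1 z.2))]
      exact one_div_le_one_div_of_le hδpos (hDδ z.1 z.2)
    exact mul_le_mul (hNC z) h1 (abs_nonneg _) hCnn
  have prodToIter : (∫ z, N z * (1 / D z.1 z.2) ∂(μE.prod μE))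
      = ∫ θ₁ in E, ∫ θ₂ in E, N (θ₁, θ₂) * (1 / D θ₁ θ₂) := integral_prod _ stepD
  -- assemble
  have lhs_eq : q * (∫ ρ in Set.Ioi (0:ℝ),
      Real.exp (-(ρ * (2 * q ^ 2 + r ^ 2 + s ^ 2))) *
        (r * besselI0 (2 * q * r * ρ) - q * besselI1 (2 * q * r * ρ)) *
        (s * besselI0 (2 * q * s * ρ) - q * besselI1 (2 * q * s * ρ)) * r * s)
      = q * ((r * s / (4 * π ^ 2)) * ∫ θ₁ in E, ∫ θ₂ in E, N (θ₁, θ₂) * (1 / D θ₁ θ₂)) := by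
    congr 1
    rw [← prodToIter]
    rw [show (∫ z, N z * (1 / D z.1 z.2) ∂(μE.prod μE))
        = ∫ z, (∫ ρ in Ioi (0:ℝ), f ρ z) ∂(μE.prod μE) from
      integral_congr_ae (Filter.Eventually.of_forall fun z => (stepC z).symm)]
    rw [← swap, ← MeasureTheory.integral_const_mul]
    apply integral_congr_ae
    filter_upwards with ρ
    exact stepA ρ
  rw [lhs_eq]
  rw [intervalIntegral.integral_of_le h2π]
  have inner_eq : ∀ θ₁ : ℝ,
      (∫ θ₂ in (0:ℝ)..(2 * π),
        q * r * s * ((r - q * Real.cos θ₁) * (s - q * Real.cos θ₂)) /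
          (q ^ 2 + r ^ 2 - 2 * q * r * Real.cos θ₁ +
            q ^ 2 + s ^ 2 - 2 * q * s * Real.cos θ₂))
      = (q * r * s) * ∫ θ₂ in E, N (θ₁, θ₂) * (1 / D θ₁ θ₂) := by
    intro θ₁
    rw [intervalIntegral.integral_of_le h2π, ← MeasureTheory.integral_const_mul]
    apply integral_congr_ae
    filter_upwards with θ₂
    simp only [hN, hD]
    field_simp
  have outer_eq : (∫ θ₁ in E, ∫ θ₂ in (0:ℝ)..(2 * π),
      q * r * s * ((r - q * Real.cos θ₁) * (s - q * Real.cos θ₂)) /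
          (q ^ 2 + r ^ 2 - 2 * q * r * Real.cos θ₁ +
            q ^ 2 + s ^ 2 - 2 * q * s * Real.cos θ₂))
      = (q * r * s) * ∫ θ₁ in E, ∫ θ₂ in E, N (θ₁, θ₂) * (1 / D θ₁ θ₂) := by
    rw [← MeasureTheory.integral_const_mul]
    apply integral_congr_ae
    filter_upwards with θ₁
    exact inner_eq θ₁
  rw [outer_eq]
  ring

/-- Lemma 3.2: for `β = 0` the kernel has the representation
`k₀(r,s) = (1/4π²) ∫₀¹ ∫₀^{2π} ∫₀^{2π} qrs (r − q cos θ₁)(s − q cos θ₂) /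
(q² + r² − 2qr cos θ₁ + q² + s² − 2qs cos θ₂) dθ₁ dθ₂ dq`. -/
theorem stmt_11 (r s : ℝ) (hr : 0 < r) (hs : 0 < s) :
    ker 0 r s =
      (1 / (4 * π ^ 2)) * ∫ q in (0:ℝ)..1, ∫ θ₁ in (0:ℝ)..(2 * π), ∫ θ₂ in (0:ℝ)..(2 * π),
        q * r * s * ((r - q * Real.cos θ₁) * (s - q * Real.cos θ₂)) /
          (q ^ 2 + r ^ 2 - 2 * q * r * Real.cos θ₁ +
            q ^ 2 + s ^ 2 - 2 * q * s * Real.cos θ₂) := by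
  have h0 : ∀ᵐ q : ℝ, q ∉ ({r, s} : Set ℝ) :=
    measure_eq_zero_iff_ae_notMem.mp (Set.Finite.measure_zero (Set.toFinite _) _)
  have hcong : ∀ᵐ q : ℝ, q ∈ Set.uIoc (0:ℝ) 1 →
      (q * ∫ ρ in Set.Ioi (0:ℝ),
        Real.exp (-(ρ * (2 * q ^ 2 + r ^ 2 + s ^ 2))) *
          (r * besselI0 (2 * q * r * ρ) - q * besselI1 (2 * q * r * ρ)) *
          (s * besselI0 (2 * q * s * ρ) - q * besselI1 (2 * q * s * ρ)) * r * s)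
      = (1 / (4 * π ^ 2)) * ∫ θ₁ in (0:ℝ)..(2 * π), ∫ θ₂ in (0:ℝ)..(2 * π),
          q * r * s * ((r - q * Real.cos θ₁) * (s - q * Real.cos θ₂)) /
            (q ^ 2 + r ^ 2 - 2 * q * r * Real.cos θ₁ +
              q ^ 2 + s ^ 2 - 2 * q * s * Real.cos θ₂) := by
    filter_upwards [h0] with q hq hmem
    rw [Set.uIoc_of_le (by norm_num : (0:ℝ) ≤ 1)] at hmem
    refine key r s hr hs q hmem.1 ?_ ?_
    · intro h; exact hq (by simp [h])
    · intro h; exact hq (by simp [h])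
  unfold ker
  rw [intervalIntegral.integral_congr_ae hcong, intervalIntegral.integral_const_mul]
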